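/- (Corollary 1) Let A_1, …, A_N be real n×n matrices and consider the linear switched system with vector fields f_i(x) = A_i x. Suppose B ⊆ ℝⁿ is a compact absorbing set for the switched system. Then the switched system has no nontrivial periodic solutions: if x is a solution and T > 0 is such that x(t + T) = x(t) for all t ≥ 0, then x(t) = 0 for all t ≥ 0. -/

import Mathlib

/-- A solution of the linear switched system determined by the matrices `A i`:
a function differentiable on `[0,∞)` whose derivative at each `t ≥ 0` is `A i (x t)`
for some index `i` (arbitrary switching). -/
def IsSwitchedSolution {n N : ℕ} (A : Fin N → Matrix (Fin n) (Fin n) ℝ)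
    (x : ℝ → EuclideanSpace ℝ (Fin n)) : Prop :=
  ∀ t : ℝ, 0 ≤ t → ∃ i : Fin N,
    HasDerivWithinAt x (WithLp.toLp 2 ((A i).mulVec (x t))) (Set.Ici 0) t

/-- `M` is positively invariant for the linear switched system. -/
def PositivelyInvariant {n N : ℕ} (A : Fin N → Matrix (Fin n) (Fin n) ℝ)
    (M : Set (EuclideanSpace ℝ (Fin n))) : Prop :=
  ∀ x : ℝ → EuclideanSpace ℝ (Fin n), IsSwitchedSolution A x →
    x 0 ∈ M → ∀ t : ℝ, 0 ≤ t → x t ∈ M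

/-- `M` is an absorbing set for the linear switched system. -/
def AbsorbingSet {n N : ℕ} (A : Fin N → Matrix (Fin n) (Fin n) ℝ)
    (M : Set (EuclideanSpace ℝ (Fin n))) : Prop :=
  PositivelyInvariant A M ∧
    ∀ C : Set (EuclideanSpace ℝ (Fin n)), IsCompact C →
      ∃ tC : ℝ, 0 ≤ tC ∧
        ∀ x : ℝ → EuclideanSpace ℝ (Fin n), IsSwitchedSolution A x →
          x 0 ∈ C → ∀ t : ℝ, tC ≤ t → x t ∈ M

/-- Scalar multiples of solutions are solutions (linearity). -/
lemma smul_isSwitchedSolution {n N : ℕ} (A : Fin N → Matrix (Fin n) (Fin n) ℝ)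
    (x : ℝ → EuclideanSpace ℝ (Fin n)) (hx : IsSwitchedSolution A x) (c : ℝ) :
    IsSwitchedSolution A (fun t => c • x t) := by
  intro t ht
  obtain ⟨i, hi⟩ := hx t ht
  refine ⟨i, ?_⟩
  have := hi.const_smul c
  have h2 : (A i).mulVec (c • x t) = c • (A i).mulVec (x t) := by
    ext j
    simp [Matrix.mulVec, dotProduct, Finset.mul_sum, mul_left_comm]
  simp only [WithLp.ofLp_smul, h2]
  exact this

/-- Iterating periodicity. -/
lemma periodic_iter {α : Type*} (x : ℝ → α) (T : ℝ) (hT : 0 < T)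
    (hper : ∀ t : ℝ, 0 ≤ t → x (t + T) = x t) :
    ∀ k : ℕ, ∀ t : ℝ, 0 ≤ t → x (t + k * T) = x t := by
  intro k
  induction k with
  | zero => intro t ht; simp
  | succ k ih =>
    intro t ht
    have h1 : t + (k + 1 : ℕ) * T = (t + k * T) + T := by push_cast; ring
    rw [h1, hper _ (by positivity), ih t ht]

/-- Corollary 1: a linear switched system possessing a compact absorbing set has no
nontrivial periodic solution: any solution that is periodic with some period `T > 0`
is identically zero on `[0,∞)`. -/
theorem no_nontrivial_periodic_solution_of_absorbing {n N : ℕ}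
    (A : Fin N → Matrix (Fin n) (Fin n) ℝ)
    (B : Set (EuclideanSpace ℝ (Fin n))) (hB : IsCompact B)
    (habs : AbsorbingSet A B) :
    ∀ x : ℝ → EuclideanSpace ℝ (Fin n), IsSwitchedSolution A x →
      ∀ T : ℝ, 0 < T → (∀ t : ℝ, 0 ≤ t → x (t + T) = x t) →
        ∀ t : ℝ, 0 ≤ t → x t = 0 := by
  intro x hx T hT hper t ht
  obtain ⟨R, hR⟩ := hB.isBounded.exists_norm_le
  -- For every c : ℝ, c • x t ∈ B
  have key : ∀ c : ℝ, c • x t ∈ B := by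
    intro c
    obtain ⟨tC, htC0, htC⟩ := habs.2 {c • x 0} isCompact_singleton
    obtain ⟨k, hk⟩ := exists_nat_ge (tC / T)
    have hkT : tC ≤ t + k * T := by
      have : tC ≤ k * T := by
        rw [div_le_iff₀ hT] at hk
        exact hk
      linarith
    have := htC (fun s => c • x s) (smul_isSwitchedSolution A x hx c) rfl
      (t + k * T) hkT
    simpa [periodic_iter x T hT hper k t ht] using this
  by_contra hne
  have hpos : 0 < ‖x t‖ := by simpa [norm_pos_iff] using hne
  obtain ⟨m, hm⟩ := exists_nat_gt (R / ‖x t‖)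
  have h1 := hR _ (key m)
  have h2 : ‖(m : ℝ) • x t‖ = m * ‖x t‖ := by
    rw [norm_smul]; simp
  rw [h2] at h1
  rw [div_lt_iff₀ hpos] at hm
  linarith
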